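/- Let d ≥ 1 and p_1, …, p_d ∈ (0,1), set μ = p_1 + ⋯ + p_d, and let S¹, S² be two independent oriented random walks associated to the positive vector p = (p_1, …, p_d), with first meeting time τ = inf{n ≥ 1 : S¹_n = S²_n}. Then ∑_{m=1}^∞ b_m < 1 if and only if ∑_{m=2}^∞ ℚ(τ = m) < 1 − 1/μ. -/

import Mathlib

open MeasureTheory ProbabilityTheory

/-- The `i`-th standard basis vector of `ℤ^d`. -/
def stdBasis (d : ℕ) (i : Fin d) : Fin d → ℤ := fun j => if j = i then 1 else 0

/-- A percolation configuration: each oriented edge `⟨x, x + e i⟩`, encoded as the pair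
`(x, i)`, is either open (`true`) or closed (`false`). -/
abbrev Config (d : ℕ) := ((Fin d → ℤ) × Fin d) → Bool

/-- The position after `j` steps of the oriented path starting at the origin whose
sequence of step directions is `γ`. -/
def pathPos (d : ℕ) {n : ℕ} (γ : Fin n → Fin d) (j : ℕ) : Fin d → ℤ :=
  ∑ t ∈ Finset.univ.filter (fun t : Fin n => (t : ℕ) < j), stdBasis d (γ t)

/-- The oriented path with step directions `γ` starting at the origin is open in the
configuration `ω`: each of its oriented edges is open. -/
def pathOpen (d : ℕ) {n : ℕ} (ω : Config d) (γ : Fin n → Fin d) : Prop :=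
  ∀ j : Fin n, ω (pathPos d γ (j : ℕ), γ j) = true

/-- The open cluster of the origin: all vertices reachable from `0` by an open oriented path. -/
def cluster (d : ℕ) (ω : Config d) : Set (Fin d → ℤ) :=
  {x | ∃ (n : ℕ) (γ : Fin n → Fin d), pathOpen d ω γ ∧ pathPos d γ n = x}

/-- The set of oriented edges used by an oriented path with step directions `γ`. -/
noncomputable def pathEdges (d : ℕ) {n : ℕ} (γ : Fin n → Fin d) :
    Finset ((Fin d → ℤ) × Fin d) :=
  Finset.image (fun j : Fin n => (pathPos d γ (j : ℕ), γ j)) Finset.univ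

/-- `ℙ(γ₁, γ₂ open)`: the product, over the distinct oriented edges used by `γ₁` or `γ₂`,
of the probability `p i` of each edge (an edge in direction `e i` contributes `p i`). -/
noncomputable def pairProb (d : ℕ) (p : Fin d → ℝ) {n : ℕ} (γ₁ γ₂ : Fin n → Fin d) : ℝ :=
  ∏ e ∈ pathEdges d γ₁ ∪ pathEdges d γ₂, p e.2

/-- `a n = μ^{-2n} ∑_{(γ₁,γ₂) ∈ 𝒞_n², f(γ₁)=f(γ₂)} ℙ(γ₁, γ₂ open)`. -/
noncomputable def aSeq (d : ℕ) (p : Fin d → ℝ) (n : ℕ) : ℝ :=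
  (∑ gg ∈ Finset.univ.filter
      (fun gg : (Fin n → Fin d) × (Fin n → Fin d) => pathPos d gg.1 n = pathPos d gg.2 n),
    pairProb d p gg.1 gg.2) / (∑ i, p i) ^ (2 * n)

open Classical in
/-- `b m = μ^{-2m} ∑_{(γ₁,γ₂) ∈ A_m} ℙ(γ₁, γ₂ open)`, where `A_m` is the set of pairs of
paths of length `m` whose intermediate vertices are everywhere distinct and whose final
vertices coincide. -/
noncomputable def bSeq (d : ℕ) (p : Fin d → ℝ) (m : ℕ) : ℝ :=
  (∑ gg ∈ Finset.univ.filter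
      (fun gg : (Fin m → Fin d) × (Fin m → Fin d) =>
        (∀ i ∈ Finset.Ioo 0 m, pathPos d gg.1 i ≠ pathPos d gg.2 i) ∧
          pathPos d gg.1 m = pathPos d gg.2 m),
    pairProb d p gg.1 gg.2) / (∑ i, p i) ^ (2 * m)

/-- The position at time `n` of the `i`-th walk, given the family of steps `ξ`:
`S^i_n = ξ^i_1 + ⋯ + ξ^i_n`. -/
def walkSum {Ω : Type*} {k : ℕ} (ξ : Fin 2 × ℕ → Ω → (Fin k → ℤ)) (i : Fin 2)
    (n : ℕ) (ω : Ω) : Fin k → ℤ :=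
  ∑ t ∈ Finset.range n, ξ (i, t) ω

/-- The event that the two walks are at the same place at time `n`. -/
def meetEvent {Ω : Type*} {k : ℕ} (ξ : Fin 2 × ℕ → Ω → (Fin k → ℤ)) (n : ℕ) : Set Ω :=
  {ω | walkSum ξ 0 n ω = walkSum ξ 1 n ω}

/-- The event `{τ = n}` where `τ = inf {n ≥ 1 : S¹_n = S²_n}` is the first meeting
time of the two walks. -/
def tauEvent {Ω : Type*} {k : ℕ} (ξ : Fin 2 × ℕ → Ω → (Fin k → ℤ)) (n : ℕ) : Set Ω :=
  {ω | walkSum ξ 0 n ω = walkSum ξ 1 n ω ∧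
    ∀ m : ℕ, 0 < m → m < n → walkSum ξ 0 m ω ≠ walkSum ξ 1 m ω}

lemma stdBasis_injective (d : ℕ) : Function.Injective (stdBasis d) := by
  intro i j h
  by_contra hij
  have : (if i = i then (1:ℤ) else 0) = (if i = j then 1 else 0) := congrFun h i
  rw [if_pos rfl] at this
  rw [if_neg hij] at this
  exact one_ne_zero this

lemma pathPos_sum_range {d n : ℕ} (γ : Fin n → Fin d) (γ' : ℕ → Fin d)
    (hγ : ∀ t : Fin n, γ' t = γ t) {m : ℕ} (hm : m ≤ n) :
    pathPos d γ m = ∑ t ∈ Finset.range m, stdBasis d (γ' t) := by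
  unfold pathPos
  refine Finset.sum_bij (fun a _ => (a : ℕ)) ?_ ?_ ?_ ?_
  · intro a ha; simp only [Finset.mem_filter] at ha; simp [ha.2]
  · intro a ha b hb h; exact Fin.ext h
  · intro b hb
    simp only [Finset.mem_range] at hb
    exact ⟨⟨b, lt_of_lt_of_le hb hm⟩, by simp [hb], rfl⟩
  · intro a ha; rw [hγ a]

lemma card_filter_lt {d n : ℕ} (γ : Fin n → Fin d) {m : ℕ} (hm : m ≤ n) :
    (Finset.univ.filter (fun t : Fin n => (t : ℕ) < m)).card = m := by
  have h := Finset.card_bij (s := Finset.univ.filter (fun t : Fin n => (t : ℕ) < m))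
    (t := Finset.range m) (fun a _ => (a : ℕ)) ?_ ?_ ?_
  · rw [h, Finset.card_range]
  · intro a ha; simp only [Finset.mem_filter] at ha; simp [ha.2]
  · intro a ha b hb h; exact Fin.ext h
  · intro b hb
    simp only [Finset.mem_range] at hb
    exact ⟨⟨b, lt_of_lt_of_le hb hm⟩, by simp [hb], rfl⟩

lemma coordSum {d n : ℕ} (γ : Fin n → Fin d) {m : ℕ} (hm : m ≤ n) :
    ∑ k, pathPos d γ m k = (m : ℤ) := by
  unfold pathPos
  simp only [Finset.sum_apply]
  rw [Finset.sum_comm]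
  have h1 : ∀ t : Fin n, ∑ k, stdBasis d (γ t) k = 1 := by
    intro t; simp [stdBasis]
  rw [Finset.sum_congr rfl (fun t _ => h1 t), Finset.sum_const, card_filter_lt γ hm]
  simp

lemma edge_injective {d n : ℕ} (γ : Fin n → Fin d) :
    Function.Injective (fun j : Fin n => (pathPos d γ (j : ℕ), γ j)) := by
  intro j1 j2 h
  have h1 : pathPos d γ (j1 : ℕ) = pathPos d γ (j2 : ℕ) := congrArg Prod.fst h
  have h2 : ((j1 : ℕ) : ℤ) = ((j2 : ℕ) : ℤ) := by
    rw [← coordSum γ (le_of_lt j1.isLt), ← coordSum γ (le_of_lt j2.isLt), h1]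
  exact Fin.ext (by exact_mod_cast h2)

lemma prod_pathEdges {d n : ℕ} (p : Fin d → ℝ) (γ : Fin n → Fin d) :
    ∏ e ∈ pathEdges d γ, p e.2 = ∏ j : Fin n, p (γ j) := by
  unfold pathEdges
  rw [Finset.prod_image (fun a _ b _ h => edge_injective γ h)]

lemma pathPos_one {d n : ℕ} (hn : 0 < n) (γ : Fin n → Fin d) :
    pathPos d γ 1 = stdBasis d (γ ⟨0, hn⟩) := by
  unfold pathPos
  rw [show Finset.univ.filter (fun t : Fin n => (t : ℕ) < 1) = {⟨0, hn⟩} by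
    ext t; simp [Fin.ext_iff, Nat.lt_one_iff]]
  simp

lemma edges_disjoint {d n : ℕ} (hn : 2 ≤ n) (γ₁ γ₂ : Fin n → Fin d)
    (h : ∀ i ∈ Finset.Ioo 0 n, pathPos d γ₁ i ≠ pathPos d γ₂ i) :
    Disjoint (pathEdges d γ₁) (pathEdges d γ₂) := by
  rw [Finset.disjoint_left]
  rintro e h1 h2
  simp only [pathEdges, Finset.mem_image, Finset.mem_univ, true_and] at h1 h2
  obtain ⟨j1, rfl⟩ := h1
  obtain ⟨j2, hj2⟩ := h2
  have hfst : pathPos d γ₂ (j2 : ℕ) = pathPos d γ₁ (j1 : ℕ) := congrArg Prod.fst hj2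
  have hje : ((j2 : ℕ) : ℤ) = ((j1 : ℕ) : ℤ) := by
    rw [← coordSum γ₂ (le_of_lt j2.isLt), ← coordSum γ₁ (le_of_lt j1.isLt), hfst]
  have hj : (j2 : ℕ) = (j1 : ℕ) := by exact_mod_cast hje
  have hsnd : γ₂ j2 = γ₁ j1 := congrArg Prod.snd hj2
  rcases Nat.eq_zero_or_pos (j1 : ℕ) with h0 | hpos
  · -- first steps coincide, so paths meet at time 1
    have hn0 : 0 < n := by omega
    have hj10 : j1 = ⟨0, hn0⟩ := Fin.ext h0
    have hj20 : j2 = ⟨0, hn0⟩ := Fin.ext (by omega)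
    rw [hj10, hj20] at hsnd
    have heq : γ₁ ⟨0, hn0⟩ = γ₂ ⟨0, hn0⟩ := hsnd.symm
    have : pathPos d γ₁ 1 = pathPos d γ₂ 1 := by
      rw [pathPos_one hn0, pathPos_one hn0, heq]
    exact h 1 (Finset.mem_Ioo.mpr ⟨one_pos, by omega⟩) this
  · refine h (j2 : ℕ) (Finset.mem_Ioo.mpr ⟨by omega, j2.isLt⟩) ?_
    have hj' : j2 = j1 := Fin.ext hj
    rw [hj'] at hfst ⊢
    exact hfst.symm

lemma pairProb_eq {d n : ℕ} (hn : 2 ≤ n) (p : Fin d → ℝ) (γ₁ γ₂ : Fin n → Fin d)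
    (h : ∀ i ∈ Finset.Ioo 0 n, pathPos d γ₁ i ≠ pathPos d γ₂ i) :
    pairProb d p γ₁ γ₂ = (∏ j : Fin n, p (γ₁ j)) * (∏ j : Fin n, p (γ₂ j)) := by
  unfold pairProb
  rw [Finset.prod_union (edges_disjoint hn γ₁ γ₂ h), prod_pathEdges, prod_pathEdges]

lemma bSeq_one {d : ℕ} (p : Fin d → ℝ) (hμ : (∑ i, p i) ≠ 0) :
    bSeq d p 1 = 1 / (∑ i, p i) := by
  classical
  unfold bSeq
  have hfilt : (Finset.univ.filter
      (fun gg : (Fin 1 → Fin d) × (Fin 1 → Fin d) =>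
        (∀ i ∈ Finset.Ioo 0 1, pathPos d gg.1 i ≠ pathPos d gg.2 i) ∧
          pathPos d gg.1 1 = pathPos d gg.2 1)) =
      Finset.univ.filter (fun gg : (Fin 1 → Fin d) × (Fin 1 → Fin d) => gg.1 = gg.2) := by
    ext gg
    simp only [Finset.mem_filter, Finset.mem_univ, true_and]
    have hIoo : Finset.Ioo 0 1 = (∅ : Finset ℕ) := rfl
    simp only [hIoo, Finset.notMem_empty, false_implies, implies_true, true_and]
    rw [pathPos_one one_pos, pathPos_one one_pos]
    constructor
    · intro h
      funext t
      have ht : t = ⟨0, one_pos⟩ := Subsingleton.elim _ _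
      rw [ht]
      exact stdBasis_injective d h
    · intro h; rw [h]
  rw [hfilt]
  have hterm : ∀ γ : Fin 1 → Fin d, pairProb d p γ γ = p (γ ⟨0, one_pos⟩) := by
    intro γ
    unfold pairProb
    rw [Finset.union_self, prod_pathEdges]
    rw [Fin.prod_univ_one]
    exact congrArg p (congrArg γ (Subsingleton.elim _ _))
  have hsum : (∑ gg ∈ Finset.univ.filter
      (fun gg : (Fin 1 → Fin d) × (Fin 1 → Fin d) => gg.1 = gg.2),
      pairProb d p gg.1 gg.2) = ∑ i, p i := by
    rw [Finset.sum_filter, Fintype.sum_prod_type]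
    have : ∀ γ1 : Fin 1 → Fin d,
        (∑ γ2 : Fin 1 → Fin d, if γ1 = γ2 then pairProb d p γ1 γ2 else 0)
          = p (γ1 ⟨0, one_pos⟩) := by
      intro γ1
      rw [Finset.sum_ite_eq Finset.univ γ1 (fun γ2 => pairProb d p γ1 γ2)]
      simp [hterm γ1]
    rw [Finset.sum_congr rfl (fun γ1 _ => this γ1)]
    exact Fintype.sum_bijective _ (Equiv.funUnique (Fin 1) (Fin d)).bijective _ _
      (fun γ => congrArg p (congrArg γ (Subsingleton.elim _ _)))
  rw [hsum]
  rw [show 2 * 1 = 2 from rfl, sq]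
  field_simp

lemma walkSum_eq {d n : ℕ} {Ω : Type*} (ξ : Fin 2 × ℕ → Ω → (Fin d → ℤ)) (i : Fin 2)
    (ω : Ω) (γ : Fin n → Fin d) (hω : ∀ t : Fin n, ξ (i, (t : ℕ)) ω = stdBasis d (γ t))
    (hn : 0 < n) {m : ℕ} (hm : m ≤ n) : walkSum ξ i m ω = pathPos d γ m := by
  have hγ : ∀ t : Fin n, (fun u : ℕ => if h : u < n then γ ⟨u, h⟩ else γ ⟨0, hn⟩) (t : ℕ) = γ t :=
    fun t => by simp [t.isLt]
  rw [pathPos_sum_range γ (fun u : ℕ => if h : u < n then γ ⟨u, h⟩ else γ ⟨0, hn⟩) hγ hm,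
    walkSum]
  apply Finset.sum_congr rfl
  intro t ht
  have htn : t < n := lt_of_lt_of_le (Finset.mem_range.mp ht) hm
  rw [hω ⟨t, htn⟩]
  simp [htn]

lemma tau_measure
    (d : ℕ) (hd : 1 ≤ d)
    (p : Fin d → ℝ) (hp : ∀ i, p i ∈ Set.Ioo (0 : ℝ) 1)
    (μ : ℝ) (hμ : μ = ∑ i, p i)
    {Ω : Type*} [MeasurableSpace Ω] (Q : Measure Ω) [IsProbabilityMeasure Q]
    (ξ : Fin 2 × ℕ → Ω → (Fin d → ℤ))
    (hmeas : ∀ a, Measurable (ξ a))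
    (hindep : iIndepFun ξ Q)
    (hlaw : ∀ a i, Q {ω | ξ a ω = stdBasis d i} = ENNReal.ofReal (p i / μ))
    (n : ℕ) (hn : 2 ≤ n) :
    Q (tauEvent ξ n) = ENNReal.ofReal (bSeq d p n) := by
  classical
  have hd0 : 0 < d := hd
  have hn0 : 0 < n := by omega
  have hμpos : 0 < μ := by
    rw [hμ]
    exact Finset.sum_pos (fun i _ => (hp i).1) (by simp [Finset.univ_nonempty_iff, Fin.pos_iff_nonempty.mp hd0])
  -- the index set of relevant steps
  set s : Finset (Fin 2 × ℕ) := Finset.univ ×ˢ Finset.range n with hs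
  -- the step directions prescribed by a pair of paths
  set c : ((Fin n → Fin d) × (Fin n → Fin d)) → Fin 2 × ℕ → Fin d :=
    fun gg a => if h : a.2 < n then (if a.1 = 0 then gg.1 ⟨a.2, h⟩ else gg.2 ⟨a.2, h⟩)
      else ⟨0, hd0⟩ with hc
  have hc0 : ∀ gg (t : Fin n), c gg (0, (t : ℕ)) = gg.1 t := by
    intro gg t; simp [hc, t.isLt]
  have hc1 : ∀ gg (t : Fin n), c gg (1, (t : ℕ)) = gg.2 t := by
    intro gg t; simp [hc, t.isLt]
  -- the elementary events
  set E : ((Fin n → Fin d) × (Fin n → Fin d)) → Set Ω :=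
    fun gg => ⋂ a ∈ s, ξ a ⁻¹' {stdBasis d (c gg a)} with hE
  have hEmeas : ∀ gg, MeasurableSet (E gg) :=
    fun gg => MeasurableSet.biInter s.countable_toSet
      (fun a _ => (hmeas a) (measurableSet_singleton _))
  have hmemE : ∀ gg ω, ω ∈ E gg ↔
      (∀ t : Fin n, ξ (0, (t : ℕ)) ω = stdBasis d (gg.1 t)) ∧
      (∀ t : Fin n, ξ (1, (t : ℕ)) ω = stdBasis d (gg.2 t)) := by
    intro gg ω
    simp only [hE, Set.mem_iInter, Set.mem_preimage, Set.mem_singleton_iff]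
    constructor
    · intro h
      refine ⟨fun t => ?_, fun t => ?_⟩
      · rw [← hc0 gg t]
        exact h (0, (t : ℕ)) (by simp [hs, t.isLt])
      · rw [← hc1 gg t]
        exact h (1, (t : ℕ)) (by simp [hs, t.isLt])
    · rintro ⟨h0, h1⟩ ⟨i, t⟩ ha
      have ht : t < n := by
        simp only [hs, Finset.mem_product, Finset.mem_range] at ha
        exact ha.2
      have : i = 0 ∨ i = 1 := by omega
      rcases this with rfl | rfl
      · rw [show (⟨(0 : Fin 2), t⟩ : Fin 2 × ℕ) = (0, ((⟨t, ht⟩ : Fin n) : ℕ)) from rfl,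
          h0 ⟨t, ht⟩, hc0]
      · rw [show (⟨(1 : Fin 2), t⟩ : Fin 2 × ℕ) = (1, ((⟨t, ht⟩ : Fin n) : ℕ)) from rfl,
          h1 ⟨t, ht⟩, hc1]
  -- measure of an elementary event
  have hQE : ∀ gg, Q (E gg) =
      ENNReal.ofReal ((∏ j : Fin n, p (gg.1 j)) * (∏ j : Fin n, p (gg.2 j)) / μ ^ (2 * n)) := by
    intro gg
    have h1 : Q (E gg) = ∏ a ∈ s, Q (ξ a ⁻¹' {stdBasis d (c gg a)}) := by
      refine hindep.meas_biInter (fun a _ => ⟨{stdBasis d (c gg a)}, measurableSet_singleton _, rfl⟩)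
    have h2 : ∀ a : Fin 2 × ℕ, Q (ξ a ⁻¹' {stdBasis d (c gg a)})
        = ENNReal.ofReal (p (c gg a) / μ) := by
      intro a
      rw [show ξ a ⁻¹' {stdBasis d (c gg a)} = {ω | ξ a ω = stdBasis d (c gg a)} from rfl]
      exact hlaw a (c gg a)
    rw [h1, Finset.prod_congr rfl (fun a _ => h2 a), hs, Finset.prod_product,
      Fin.prod_univ_two]
    have h3 : ∀ γ : Fin n → Fin d, (i : Fin 2) → (hci : ∀ t : Fin n, c gg (i, (t : ℕ)) = γ t) →
        (∏ t ∈ Finset.range n, ENNReal.ofReal (p (c gg (i, t)) / μ))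
          = ENNReal.ofReal ((∏ j : Fin n, p (γ j)) / μ ^ n) := by
      intro γ i hci
      rw [← Fin.prod_univ_eq_prod_range (fun t => ENNReal.ofReal (p (c gg (i, t)) / μ)) n]
      have : ∀ t : Fin n, ENNReal.ofReal (p (c gg (i, (t : ℕ))) / μ)
          = ENNReal.ofReal (p (γ t) / μ) := fun t => by rw [hci t]
      rw [Finset.prod_congr rfl (fun t _ => this t),
        ← ENNReal.ofReal_prod_of_nonneg (fun t _ => div_nonneg (hp (γ t)).1.le hμpos.le)]
      congr 1
      rw [Finset.prod_div_distrib, Finset.prod_const]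
      simp
    rw [h3 gg.1 0 (hc0 gg), h3 gg.2 1 (hc1 gg),
      ← ENNReal.ofReal_mul (div_nonneg (Finset.prod_nonneg (fun j _ => (hp (gg.1 j)).1.le))
        (pow_nonneg hμpos.le n))]
    congr 1
    rw [two_mul, pow_add, div_mul_div_comm]
  -- almost surely every step is a standard basis vector
  have hbasis_meas : MeasurableSet (Set.range (stdBasis d)) := by
    rw [Set.range_eq_iUnion]
    exact MeasurableSet.iUnion (fun i => measurableSet_singleton _)
  have hnull : ∀ a : Fin 2 × ℕ, Q ((ξ a) ⁻¹' (Set.range (stdBasis d))ᶜ) = 0 := by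
    intro a
    have hr : (ξ a) ⁻¹' (Set.range (stdBasis d)) = ⋃ i : Fin d, ξ a ⁻¹' {stdBasis d i} := by
      rw [Set.range_eq_iUnion, Set.preimage_iUnion]
    have hone : Q ((ξ a) ⁻¹' (Set.range (stdBasis d))) = 1 := by
      rw [hr, measure_iUnion ?_ (fun i => (hmeas a) (measurableSet_singleton _))]
      · have : ∀ i : Fin d, Q (ξ a ⁻¹' {stdBasis d i}) = ENNReal.ofReal (p i / μ) :=
          fun i => hlaw a i
        rw [tsum_fintype, Finset.sum_congr rfl (fun i _ => this i),
          ← ENNReal.ofReal_sum_of_nonneg (fun i _ => div_nonneg (hp i).1.le hμpos.le),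
          ← Finset.sum_div, ← hμ, div_self (ne_of_gt hμpos), ENNReal.ofReal_one]
      · intro i j hij
        simp only [Function.onFun]
        refine Set.disjoint_left.mpr (fun ω hi hj => hij ?_)
        simp only [Set.mem_preimage, Set.mem_singleton_iff] at hi hj
        exact stdBasis_injective d (hi ▸ hj ▸ rfl : stdBasis d i = stdBasis d j)
    rw [Set.preimage_compl, measure_compl ((hmeas a) hbasis_meas) (measure_ne_top Q _), hone,
      measure_univ, tsub_self]
  -- the good event
  set G : Set Ω := ⋂ a ∈ s, ξ a ⁻¹' (Set.range (stdBasis d)) with hG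
  have hGnull : Q Gᶜ = 0 := by
    rw [hG, Set.compl_iInter₂]
    refine le_antisymm (le_trans (measure_biUnion_finset_le s _) ?_) zero_le
    refine le_of_eq (Finset.sum_eq_zero (fun a _ => ?_))
    rw [← Set.preimage_compl]
    exact hnull a
  -- the set of admissible pairs of paths
  set A : Finset ((Fin n → Fin d) × (Fin n → Fin d)) := Finset.univ.filter
      (fun gg : (Fin n → Fin d) × (Fin n → Fin d) =>
        (∀ i ∈ Finset.Ioo 0 n, pathPos d gg.1 i ≠ pathPos d gg.2 i) ∧
          pathPos d gg.1 n = pathPos d gg.2 n) with hA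
  have hmemA : ∀ gg : (Fin n → Fin d) × (Fin n → Fin d), gg ∈ A ↔
      ((∀ i ∈ Finset.Ioo 0 n, pathPos d gg.1 i ≠ pathPos d gg.2 i) ∧
        pathPos d gg.1 n = pathPos d gg.2 n) := by
    intro gg
    simp only [hA, Finset.mem_filter, Finset.mem_univ, true_and]
  -- decomposition of the tau event
  have hdecomp : tauEvent ξ n ∩ G = ⋃ gg ∈ A, E gg := by
    ext ω
    simp only [Set.mem_inter_iff, Set.mem_iUnion, exists_prop]
    constructor
    · rintro ⟨hτ, hGω⟩
      rw [hG, Set.mem_iInter₂] at hGω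
      have h0 : ∀ t : Fin n, ∃ i : Fin d, stdBasis d i = ξ (0, (t : ℕ)) ω :=
        fun t => hGω (0, (t : ℕ)) (by simp [hs, t.isLt])
      have h1 : ∀ t : Fin n, ∃ i : Fin d, stdBasis d i = ξ (1, (t : ℕ)) ω :=
        fun t => hGω (1, (t : ℕ)) (by simp [hs, t.isLt])
      set γ1 : Fin n → Fin d := fun t => (h0 t).choose with hγ1
      set γ2 : Fin n → Fin d := fun t => (h1 t).choose with hγ2
      have hw0 : ∀ t : Fin n, ξ (0, (t : ℕ)) ω = stdBasis d (γ1 t) :=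
        fun t => ((h0 t).choose_spec).symm
      have hw1 : ∀ t : Fin n, ξ (1, (t : ℕ)) ω = stdBasis d (γ2 t) :=
        fun t => ((h1 t).choose_spec).symm
      refine ⟨(γ1, γ2), ?_, (hmemE (γ1, γ2) ω).mpr ⟨hw0, hw1⟩⟩
      obtain ⟨hτn, hτm⟩ := hτ
      refine (hmemA (γ1, γ2)).mpr ⟨fun i hi hcon => ?_, ?_⟩
      · rw [Finset.mem_Ioo] at hi
        refine hτm i hi.1 hi.2 ?_
        rw [walkSum_eq ξ 0 ω γ1 hw0 hn0 (le_of_lt hi.2),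
          walkSum_eq ξ 1 ω γ2 hw1 hn0 (le_of_lt hi.2), hcon]
      · rw [← walkSum_eq ξ 0 ω γ1 hw0 hn0 (le_refl n),
          ← walkSum_eq ξ 1 ω γ2 hw1 hn0 (le_refl n)]
        exact hτn
    · rintro ⟨gg, hggA, hωE⟩
      obtain ⟨hw0, hw1⟩ := (hmemE gg ω).mp hωE
      obtain ⟨hgg1, hgg2⟩ := (hmemA gg).mp hggA
      constructor
      · constructor
        · rw [walkSum_eq ξ 0 ω gg.1 hw0 hn0 (le_refl n),
            walkSum_eq ξ 1 ω gg.2 hw1 hn0 (le_refl n)]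
          exact hgg2
        · intro m hm1 hm2 hcon
          refine hgg1 m (Finset.mem_Ioo.mpr ⟨hm1, hm2⟩) ?_
          rw [← walkSum_eq ξ 0 ω gg.1 hw0 hn0 (le_of_lt hm2),
            ← walkSum_eq ξ 1 ω gg.2 hw1 hn0 (le_of_lt hm2)]
          exact hcon
      · rw [hG, Set.mem_iInter₂]
        rintro ⟨i, t⟩ ha
        have ht : t < n := by
          simp only [hs, Finset.mem_product, Finset.mem_range] at ha
          exact ha.2
        have : i = 0 ∨ i = 1 := by omega
        rcases this with rfl | rfl
        · exact ⟨gg.1 ⟨t, ht⟩, (hw0 ⟨t, ht⟩).symm⟩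
        · exact ⟨gg.2 ⟨t, ht⟩, (hw1 ⟨t, ht⟩).symm⟩
  -- disjointness
  have hdis : (↑A : Set ((Fin n → Fin d) × (Fin n → Fin d))).PairwiseDisjoint E := by
    intro gg _ gg' _ hne
    refine Set.disjoint_left.mpr (fun ω h1 h2 => hne ?_)
    obtain ⟨ha0, ha1⟩ := (hmemE gg ω).mp h1
    obtain ⟨hb0, hb1⟩ := (hmemE gg' ω).mp h2
    refine Prod.ext ?_ ?_
    · funext t
      exact stdBasis_injective d ((ha0 t).symm.trans (hb0 t))
    · funext t
      exact stdBasis_injective d ((ha1 t).symm.trans (hb1 t))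
  -- put everything together
  have key : Q (tauEvent ξ n) = ∑ gg ∈ A, Q (E gg) := by
    rw [← measure_inter_conull hGnull, hdecomp]
    exact measure_biUnion_finset hdis (fun gg _ => hEmeas gg)
  rw [key]
  unfold bSeq
  rw [hμ] at hμpos
  have hbs : ∀ gg ∈ A, Q (E gg) =
      ENNReal.ofReal (pairProb d p gg.1 gg.2 / (∑ i, p i) ^ (2 * n)) := by
    intro gg hgg
    have hgg' := (hmemA gg).mp hgg
    rw [hQE gg, pairProb_eq hn p gg.1 gg.2 hgg'.1, hμ]
  rw [Finset.sum_congr rfl hbs]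
  rw [← ENNReal.ofReal_sum_of_nonneg (fun gg _ => by
    have : (0:ℝ) ≤ pairProb d p gg.1 gg.2 := Finset.prod_nonneg (fun e _ => (hp e.2).1.le)
    positivity)]
  rw [← Finset.sum_div]

theorem bSeq_tsum_lt_one_iff_tau
    (d : ℕ) (hd : 1 ≤ d)
    (p : Fin d → ℝ) (hp : ∀ i, p i ∈ Set.Ioo (0 : ℝ) 1)
    (μ : ℝ) (hμ : μ = ∑ i, p i)
    {Ω : Type*} [MeasurableSpace Ω] (Q : Measure Ω) [IsProbabilityMeasure Q]
    (ξ : Fin 2 × ℕ → Ω → (Fin d → ℤ))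
    (hmeas : ∀ a, Measurable (ξ a))
    (hindep : iIndepFun ξ Q)
    (hlaw : ∀ a i, Q {ω | ξ a ω = stdBasis d i} = ENNReal.ofReal (p i / μ)) :
    (∑' m : ℕ, ENNReal.ofReal (bSeq d p (m + 1))) < 1 ↔
      (∑' m : ℕ, Q (tauEvent ξ (m + 2))) < 1 - 1 / ENNReal.ofReal μ := by
  have hμpos : 0 < μ := by
    rw [hμ]
    exact Finset.sum_pos (fun i _ => (hp i).1)
      (by simp [Finset.univ_nonempty_iff, Fin.pos_iff_nonempty.mp hd])
  have hb1 : ENNReal.ofReal (bSeq d p 1) = (ENNReal.ofReal μ)⁻¹ := by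
    rw [bSeq_one p (by rw [← hμ]; exact hμpos.ne'), ← hμ, one_div,
      ENNReal.ofReal_inv_of_pos hμpos]
  have hsplit : (∑' m : ℕ, ENNReal.ofReal (bSeq d p (m + 1)))
      = ENNReal.ofReal (bSeq d p 1) + ∑' m : ℕ, ENNReal.ofReal (bSeq d p (m + 2)) := by
    rw [tsum_eq_zero_add' (f := fun m => ENNReal.ofReal (bSeq d p (m + 1))) ENNReal.summable]
  have hQ : ∀ m : ℕ, Q (tauEvent ξ (m + 2)) = ENNReal.ofReal (bSeq d p (m + 2)) :=
    fun m => tau_measure d hd p hp μ hμ Q ξ hmeas hindep hlaw (m + 2) (by omega)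
  rw [hsplit, hb1, tsum_congr hQ, one_div]
  have hc : (ENNReal.ofReal μ)⁻¹ ≠ ⊤ :=
    ENNReal.inv_ne_top.mpr (ENNReal.ofReal_pos.mpr hμpos).ne'
  exact ((ENNReal.cancel_of_ne hc).lt_tsub_iff_left).symm
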